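/- Let d ≥ 2, λ ∈ (0,1), u_λ = λ^{1/(1-d)}, and h_λ(x) = (u_λ - λ(u_λ - x)^d)/x for x ∈ (0,1). Then h_λ is decreasing on (0,1). -/

import Mathlib

open Real Filter Set

theorem stmt_1 (d : ℕ) (hd : 2 ≤ d) (l : ℝ) (hl : l ∈ Set.Ioo (0:ℝ) 1) :
    AntitoneOn
      (fun x : ℝ =>
        (l ^ ((1:ℝ) / (1 - (d:ℝ))) - l * (l ^ ((1:ℝ) / (1 - (d:ℝ))) - x) ^ d) / x)
      (Set.Ioo (0:ℝ) 1) := by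
  obtain ⟨hl0, hl1⟩ := hl
  set u : ℝ := l ^ ((1:ℝ) / (1 - (d:ℝ))) with hu
  have hd2 : (2:ℝ) ≤ (d:ℝ) := by exact_mod_cast hd
  have hne : (1:ℝ) - (d:ℝ) ≠ 0 := by linarith
  have hexp_neg : (1:ℝ) / (1 - (d:ℝ)) < 0 := by
    apply div_neg_of_pos_of_neg one_pos; linarith
  have hu1 : 1 < u := by
    rw [hu, one_lt_rpow_iff_of_pos hl0]
    right; exact ⟨hl1, hexp_neg⟩
  -- key fixed point fact: l * u ^ d = u
  have hfix : l * u ^ d = u := by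
    rw [hu, ← rpow_natCast (l ^ ((1:ℝ) / (1 - (d:ℝ)))) d, ← rpow_mul hl0.le]
    nth_rewrite 1 [← rpow_one l]
    rw [← rpow_add hl0]
    congr 1
    field_simp
    ring
  -- g x = l * (u - x)^d is convex on Icc 0 1
  set g : ℝ → ℝ := fun x => l * (u - x) ^ d with hg
  have hconv : ConvexOn ℝ (Set.Icc (0:ℝ) 1) g := by
    have haff : ConvexOn ℝ (Set.Iic u) (fun x : ℝ => (u - x) ^ d) := by
      have h1 := (convexOn_pow d).comp_affineMap
        (AffineMap.const ℝ ℝ u - AffineMap.id ℝ ℝ)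
      have hpre : ((AffineMap.const ℝ ℝ u - AffineMap.id ℝ ℝ) ⁻¹' (Set.Ici (0:ℝ)))
          = Set.Iic u := by
        ext x
        simp [AffineMap.const, sub_nonneg]
      rw [hpre] at h1
      exact h1
    have hsub : ConvexOn ℝ (Set.Icc (0:ℝ) 1) (fun x : ℝ => (u - x) ^ d) :=
      haff.subset (fun x hx => le_trans hx.2 hu1.le) (convex_Icc 0 1)
    have := hsub.smul hl0.le
    simpa [hg, smul_eq_mul] using this
  have hg0 : g 0 = u := by simp [hg, hfix]
  intro x hx y hy hxy
  have hx0 : (0:ℝ) < x := hx.1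
  have hy0 : (0:ℝ) < y := hy.1
  have hmem : ∀ z : ℝ, z ∈ Set.Ioo (0:ℝ) 1 → z ∈ Set.Icc (0:ℝ) 1 :=
    fun z hz => ⟨hz.1.le, hz.2.le⟩
  have h0 : (0:ℝ) ∈ Set.Icc (0:ℝ) 1 := ⟨le_refl _, zero_le_one⟩
  have key := hconv.secant_mono h0 (hmem x hx) (hmem y hy) hx0.ne' hy0.ne' hxy
  rw [hg0, sub_zero, sub_zero] at key
  -- key : (g x - u)/x ≤ (g y - u)/y ; goal after negation
  have hgoal : (u - g y) / y ≤ (u - g x) / x := by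
    have h1 : (u - g x) / x = -((g x - u) / x) := by ring
    have h2 : (u - g y) / y = -((g y - u) / y) := by ring
    rw [h1, h2]
    linarith
  simpa [hg] using hgoal
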